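/- For every integer d ≥ 2, every f ∈ 𝔤_d* with f(Z_1) = ⋯ = f(Z_d) = 0 and Q_d(f(Y_1), …, f(Y_{2d})) = 0 lies in the closure of the set {ad*_X ℓ : X ∈ 𝔤_d, ℓ ∈ 𝔤_d*}; here Q_d(η_1,…,η_{2d}) = η_{2d−1}·Σ_{i=1}^{d−1}(η_{2i}·∏_{j=1, j≠i}^{d−1} η_{2j−1}) − η_{2d}·∏_{j=1}^{d−1} η_{2j−1}. -/

import Mathlib

/-- The coadjoint action of the Lie algebra: `(coad X f) W = f ⁅W, X⁆`. -/
def coad {L : Type*} [LieRing L] [LieAlgebra ℝ L] (X : L) (f : Module.Dual ℝ L) :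
    Module.Dual ℝ L where
  toFun W := f ⁅W, X⁆
  map_add' a b := by simp [add_lie]
  map_smul' c a := by simp [smul_lie]

/-- The set `{ad*_X ℓ : X ∈ 𝔤, ℓ ∈ 𝔤*}` of all coadjoint tangent vectors. -/
def adStar (L : Type*) [LieRing L] [LieAlgebra ℝ L] : Set (Module.Dual ℝ L) :=
  {g | ∃ (X : L) (ℓ : Module.Dual ℝ L), g = coad X ℓ}

/-- Coordinates of a linear functional with respect to the dual basis of `B`;
this identifies `𝔤*` with `ι → ℝ`, carrying the canonical topology. -/
noncomputable def coords {ι : Type*} {L : Type*} [LieRing L] [LieAlgebra ℝ L]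
    (B : Module.Basis ι ℝ L) (f : Module.Dual ℝ L) : ι → ℝ := fun a => f (B a)

/-- The cortex `Cor(𝔤*)`: the closure (in the canonical topology of the
finite-dimensional space `𝔤*`, transported to coordinates via the dual basis)
of the set `{ad*_X ℓ : X ∈ 𝔤, ℓ ∈ 𝔤*}`. -/
def corSet {ι : Type*} {L : Type*} [LieRing L] [LieAlgebra ℝ L] (B : Module.Basis ι ℝ L) :
    Set (Module.Dual ℝ L) :=
  {f | coords B f ∈ closure (coords B '' adStar L)}

/-- Index type for the basis of `𝔤_d`: first component indexes `Z_1,…,Z_d`, the second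
the odd `Y`'s `Y_1, Y_3, …, Y_{2d-1}`, the third the even `Y`'s `Y_2, Y_4, …, Y_{2d}`,
and the fourth `X_1,…,X_d`. -/
abbrev Idx (d : ℕ) : Type := Fin d ⊕ (Fin d ⊕ (Fin d ⊕ Fin d))

/-- Index of `Z_{i+1}`. -/
def zI {d : ℕ} (i : Fin d) : Idx d := Sum.inl i
/-- Index of `Y_{2i+1}` (odd-indexed `Y`). -/
def yoI {d : ℕ} (i : Fin d) : Idx d := Sum.inr (Sum.inl i)
/-- Index of `Y_{2i+2}` (even-indexed `Y`). -/
def yeI {d : ℕ} (i : Fin d) : Idx d := Sum.inr (Sum.inr (Sum.inl i))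
/-- Index of `X_{i+1}`. -/
def xI {d : ℕ} (i : Fin d) : Idx d := Sum.inr (Sum.inr (Sum.inr i))

/-- Value of `⁅X_{i+1}, Y_{2i+2}⁆`: `Z_{i+2}` if `i + 1 < d`, and `Z_2 + ⋯ + Z_d`
if `i + 1 = d`. -/
def gdW {d : ℕ} (hd : 2 ≤ d) {V : Type*} [AddCommGroup V] (B : Idx d → V) (i : Fin d) : V :=
  if h : (i : ℕ) < d - 1 then B (zI ⟨(i : ℕ) + 1, by omega⟩)
  else ∑ m ∈ Finset.univ.filter (fun m : Fin d => 0 < (m : ℕ)), B (zI m)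

/-- The bracket `⁅B a, B b⁆` of two basis vectors of `𝔤_d`, given by the structure
constants: `⁅X_i, Y_{2i-1}⁆ = Z_1` for `i = 1,…,d`, `⁅X_k, Y_{2k}⁆ = Z_{k+1}` for
`k = 1,…,d-1`, `⁅X_d, Y_{2d}⁆ = Z_2 + ⋯ + Z_d`, all other brackets of basis
vectors being zero (up to antisymmetry). -/
def gdBr {d : ℕ} (hd : 2 ≤ d) {V : Type*} [AddCommGroup V] (B : Idx d → V) :
    Idx d → Idx d → V
  | Sum.inr (Sum.inr (Sum.inr i)), Sum.inr (Sum.inl j) =>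
      if i = j then B (zI ⟨0, by omega⟩) else 0
  | Sum.inr (Sum.inl j), Sum.inr (Sum.inr (Sum.inr i)) =>
      if i = j then -(B (zI ⟨0, by omega⟩)) else 0
  | Sum.inr (Sum.inr (Sum.inr i)), Sum.inr (Sum.inr (Sum.inl j)) =>
      if i = j then gdW hd B i else 0
  | Sum.inr (Sum.inr (Sum.inl j)), Sum.inr (Sum.inr (Sum.inr i)) =>
      if i = j then -(gdW hd B i) else 0
  | _, _ => 0

/-- The homogeneous polynomial `Q_d` of degree `d`, evaluated at the odd coordinates
`ηo` (`ηo i = η_{2i+1}`) and the even coordinates `ηe` (`ηe i = η_{2i+2}`):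
`Q_d = η_{2d-1}·Σ_{i=1}^{d-1}(η_{2i}·∏_{j=1, j≠i}^{d-1} η_{2j-1})
      − η_{2d}·∏_{j=1}^{d-1} η_{2j-1}`. -/
def Qd (d : ℕ) (hd : 2 ≤ d) (ηo ηe : Fin d → ℝ) : ℝ :=
  ηo ⟨d - 1, by omega⟩ *
      (∑ i ∈ Finset.univ.filter (fun i : Fin d => (i : ℕ) < d - 1),
        ηe i * ∏ j ∈ Finset.univ.filter (fun j : Fin d => (j : ℕ) < d - 1 ∧ j ≠ i), ηo j)
    - ηe ⟨d - 1, by omega⟩ *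
        ∏ j ∈ Finset.univ.filter (fun j : Fin d => (j : ℕ) < d - 1), ηo j

open Finset Filter

section Realize

variable {d : ℕ} (hd : 2 ≤ d) {V : Type*} [AddCommGroup V] (Bv : Idx d → V)

lemma gdBr_zx (m i : Fin d) : gdBr hd Bv (Sum.inl m) (xI i) = 0 := rfl
lemma gdBr_zyo (m i : Fin d) : gdBr hd Bv (Sum.inl m) (yoI i) = 0 := rfl
lemma gdBr_yoyo (j i : Fin d) : gdBr hd Bv (Sum.inr (Sum.inl j)) (yoI i) = 0 := rfl
lemma gdBr_yox (j i : Fin d) :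
    gdBr hd Bv (Sum.inr (Sum.inl j)) (xI i) = if i = j then -(Bv (zI ⟨0, by omega⟩)) else 0 := rfl
lemma gdBr_yeyo (j i : Fin d) : gdBr hd Bv (Sum.inr (Sum.inr (Sum.inl j))) (yoI i) = 0 := rfl
lemma gdBr_yex (j i : Fin d) :
    gdBr hd Bv (Sum.inr (Sum.inr (Sum.inl j))) (xI i) = if i = j then -(gdW hd Bv i) else 0 := rfl
lemma gdBr_xx (i' i : Fin d) : gdBr hd Bv (Sum.inr (Sum.inr (Sum.inr i'))) (xI i) = 0 := rfl
lemma gdBr_xyo (i' j : Fin d) :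
    gdBr hd Bv (Sum.inr (Sum.inr (Sum.inr i'))) (yoI j)
      = if i' = j then Bv (zI ⟨0, by omega⟩) else 0 := rfl

end Realize

/-- The coordinate pattern of a generic coadjoint image point. -/
noncomputable def pt (d : ℕ) (o' u fx : Fin d → ℝ) : Idx d → ℝ :=
  Sum.elim (fun _ => 0) (Sum.elim o'
    (Sum.elim (fun j => o' j * (if (j : ℕ) < d - 1 then u j
        else ∑ k ∈ Finset.univ.filter (fun k : Fin d => (k : ℕ) < d - 1), u k)) fx))

lemma pt_mem (d : ℕ) (hd : 2 ≤ d) (L : Type) [LieRing L] [LieAlgebra ℝ L]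
    (B : Module.Basis (Idx d) ℝ L)
    (hbr : ∀ a b : Idx d, ⁅B a, B b⁆ = gdBr hd (fun c => B c) a b)
    (o' u fx : Fin d → ℝ) :
    pt d o' u fx ∈ coords B '' adStar L := by
  classical
  set z : Fin d → ℝ := fun m => if hm : (m : ℕ) = 0 then 1 else u ⟨(m : ℕ) - 1,
    lt_of_le_of_lt (Nat.sub_le _ _) m.isLt⟩ with hzdef
  set ℓ : Module.Dual ℝ L := ∑ m : Fin d, z m • B.coord (zI m) with hℓ
  set X : L := (∑ i : Fin d, (-(o' i)) • B (xI i)) + ∑ i : Fin d, fx i • B (yoI i) with hX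
  refine ⟨coad X ℓ, ⟨X, ℓ, rfl⟩, ?_⟩
  have hℓB : ∀ c : Idx d, ℓ (B c) = ∑ m : Fin d, z m * (if c = zI m then 1 else 0) := by
    intro c
    simp [hℓ, Module.Basis.coord_apply, Module.Basis.repr_self, Finsupp.single_apply]
  have hℓz : ∀ m : Fin d, ℓ (B (zI m)) = z m := by
    intro m
    rw [hℓB]
    simp [zI, Finset.sum_ite_eq, eq_comm]
  have hz0 : z ⟨0, by omega⟩ = 1 := by simp [hzdef]
  have hℓgdW : ∀ j : Fin d, ℓ (gdW hd (fun c => B c) j)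
      = if (j : ℕ) < d - 1 then u j
        else ∑ k ∈ Finset.univ.filter (fun k : Fin d => (k : ℕ) < d - 1), u k := by
    intro j
    unfold gdW
    by_cases h : (j : ℕ) < d - 1
    · rw [dif_pos h, if_pos h, hℓz]
      have : ((⟨(j : ℕ) + 1, by omega⟩ : Fin d) : ℕ) ≠ 0 := by simp
      rw [hzdef]
      simp only [dif_neg this]
      congr 1
    · rw [dif_neg h, if_neg h, map_sum]
      simp_rw [hℓz]
      refine Finset.sum_bij' (fun m _ => (⟨(m : ℕ) - 1,
          lt_of_le_of_lt (Nat.sub_le _ _) m.isLt⟩ : Fin d))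
        (fun k _ => (⟨(k : ℕ) + 1, ?_⟩ : Fin d)) ?_ ?_ ?_ ?_ ?_
      · next k hk =>
          simp only [Finset.mem_filter] at hk
          omega
      · intro m hm
        simp only [Finset.mem_filter, Finset.mem_univ, true_and] at hm ⊢
        have := m.isLt
        omega
      · intro k hk
        simp only [Finset.mem_filter, Finset.mem_univ, true_and] at hk ⊢
        omega
      · intro m hm
        simp only [Finset.mem_filter, Finset.mem_univ, true_and] at hm
        apply Fin.ext
        simp
        try omega
      · intro k hk
        apply Fin.ext
        simp
      · intro m hm
        simp only [Finset.mem_filter, Finset.mem_univ, true_and] at hm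
        rw [hzdef]
        have : (m : ℕ) ≠ 0 := by omega
        simp only [dif_neg this]
  have hbrX : ∀ w : Idx d, ⁅B w, X⁆ =
      ∑ i : Fin d, (-(o' i)) • gdBr hd (fun c => B c) w (xI i)
        + ∑ i : Fin d, fx i • gdBr hd (fun c => B c) w (yoI i) := by
    intro w
    have hsum : ∀ (g : Fin d → L), ⁅B w, ∑ i : Fin d, g i⁆ = ∑ i : Fin d, ⁅B w, g i⁆ :=
      fun g => map_sum (LieAlgebra.ad ℝ L (B w)) g Finset.univ
    rw [hX, lie_add, hsum, hsum]
    simp_rw [lie_smul, hbr]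
  funext w
  have : coords B (coad X ℓ) w = ℓ ⁅B w, X⁆ := rfl
  rw [this, hbrX w]
  rcases w with m | j | j | i
  · simp [gdBr_zx, gdBr_zyo, pt]
  · simp only [gdBr_yox, gdBr_yoyo, smul_zero, Finset.sum_const_zero, add_zero, smul_ite,
      Finset.sum_ite_eq', Finset.mem_univ, if_true, map_smul, smul_neg, map_neg]
    rw [hℓz, hz0]
    simp [pt]
  · simp only [gdBr_yex, gdBr_yeyo, smul_zero, Finset.sum_const_zero, add_zero, smul_ite,
      Finset.sum_ite_eq', Finset.mem_univ, if_true, map_smul, smul_neg, map_neg]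
    rw [hℓgdW]
    simp only [pt, Sum.elim_inr, Sum.elim_inl]
    split_ifs <;> simp [smul_eq_mul] <;> ring
  · simp only [gdBr_xx, gdBr_xyo, smul_zero, Finset.sum_const_zero, zero_add, smul_ite,
      Finset.sum_ite_eq, Finset.mem_univ, if_true, map_smul]
    rw [hℓz, hz0]
    simp [pt]
lemma tendsto_delta : Filter.Tendsto (fun δ : ℝ => δ) (nhdsWithin 0 (Set.Ioi 0)) (nhds 0) :=
  tendsto_id.mono_left nhdsWithin_le_nhds

lemma ev_pos : ∀ᶠ δ in nhdsWithin (0:ℝ) (Set.Ioi 0), 0 < δ := eventually_mem_nhdsWithin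

lemma sum_split (d : ℕ) (o e : Fin d → ℝ) (js : Fin d) (hjs : (js : ℕ) < d - 1)
    (ho : o js = 0) (A r : ℝ) :
    ∑ k ∈ Finset.univ.filter (fun k : Fin d => (k : ℕ) < d - 1),
      (if o k ≠ 0 then e k / o k else if k = js then A else if e k ≠ 0 then r else 0)
    = (∑ k ∈ Finset.univ.filter (fun k : Fin d => (k : ℕ) < d - 1 ∧ o k ≠ 0), e k / o k) + A
      + ((Finset.univ.filter
          (fun k : Fin d => (k : ℕ) < d - 1 ∧ o k = 0 ∧ e k ≠ 0 ∧ k ≠ js)).card : ℝ) * r := by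
  classical
  rw [← Finset.sum_filter_add_sum_filter_not
    (Finset.univ.filter (fun k : Fin d => (k : ℕ) < d - 1)) (fun k => o k ≠ 0)]
  have h1 : (Finset.univ.filter (fun k : Fin d => (k : ℕ) < d - 1)).filter (fun k => o k ≠ 0)
      = Finset.univ.filter (fun k : Fin d => (k : ℕ) < d - 1 ∧ o k ≠ 0) := by
    rw [Finset.filter_filter]
  have e1 : ∑ k ∈ (Finset.univ.filter (fun k : Fin d => (k : ℕ) < d - 1)).filter
      (fun k => o k ≠ 0),
      (if o k ≠ 0 then e k / o k else if k = js then A else if e k ≠ 0 then r else 0)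
      = ∑ k ∈ Finset.univ.filter (fun k : Fin d => (k : ℕ) < d - 1 ∧ o k ≠ 0), e k / o k := by
    rw [h1]
    refine Finset.sum_congr rfl fun k hk => ?_
    simp only [Finset.mem_filter] at hk
    rw [if_pos hk.2.2]
  rw [e1]
  set s2 := (Finset.univ.filter (fun k : Fin d => (k : ℕ) < d - 1)).filter
    (fun k => ¬ o k ≠ 0) with hs2
  have hjmem : js ∈ s2 := by
    simp [hs2, Finset.mem_filter, hjs, ho]
  have e2 : ∑ k ∈ s2,
      (if o k ≠ 0 then e k / o k else if k = js then A else if e k ≠ 0 then r else 0)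
      = ∑ k ∈ s2, (if k = js then A else if e k ≠ 0 then r else 0) := by
    refine Finset.sum_congr rfl fun k hk => ?_
    simp only [hs2, Finset.mem_filter] at hk
    rw [if_neg hk.2]
  rw [e2, ← Finset.add_sum_erase s2 _ hjmem, if_pos rfl]
  have e3 : ∑ k ∈ s2.erase js, (if k = js then A else if e k ≠ 0 then r else 0)
      = ∑ k ∈ s2.erase js, (if e k ≠ 0 then r else 0) := by
    refine Finset.sum_congr rfl fun k hk => ?_
    rw [if_neg (Finset.mem_erase.mp hk).1]
  rw [e3, ← Finset.sum_filter]
  have e4 : (s2.erase js).filter (fun k => e k ≠ 0)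
      = Finset.univ.filter (fun k : Fin d => (k : ℕ) < d - 1 ∧ o k = 0 ∧ e k ≠ 0 ∧ k ≠ js) := by
    ext k
    simp only [hs2, Finset.mem_filter, Finset.mem_erase, Finset.mem_univ, true_and, not_not]
    tauto
  rw [e4, Finset.sum_const, nsmul_eq_mul]
  ring

lemma core_inv (A D g : ℝ → ℝ) (c x : ℝ) (hc : c ≠ 0)
    (hg0 : Filter.Tendsto g (nhdsWithin 0 (Set.Ioi 0)) (nhds 0))
    (hgne : ∀ δ ∈ Set.Ioi (0:ℝ), g δ ≠ 0)
    (hAD : ∀ δ ∈ Set.Ioi (0:ℝ), A δ = D δ / g δ)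
    (hD : Filter.Tendsto D (nhdsWithin 0 (Set.Ioi 0)) (nhds c)) :
    (∀ᶠ δ in nhdsWithin (0:ℝ) (Set.Ioi 0), A δ ≠ 0) ∧
      Filter.Tendsto (fun δ => x / A δ) (nhdsWithin 0 (Set.Ioi 0)) (nhds 0) := by
  have hDne : ∀ᶠ δ in nhdsWithin (0:ℝ) (Set.Ioi 0), D δ ≠ 0 := hD.eventually_ne hc
  have hmem : ∀ᶠ δ in nhdsWithin (0:ℝ) (Set.Ioi 0), δ ∈ Set.Ioi (0:ℝ) :=
    eventually_mem_nhdsWithin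
  constructor
  · filter_upwards [hDne, hmem] with δ h1 h2
    rw [hAD δ h2]
    exact div_ne_zero h1 (hgne δ h2)
  · have key : Filter.Tendsto (fun δ => x * g δ / D δ) (nhdsWithin 0 (Set.Ioi 0))
        (nhds (x * 0 / c)) := (Filter.Tendsto.const_mul x hg0).div hD hc
    rw [show x * 0 / c = 0 by ring] at key
    refine key.congr' ?_
    filter_upwards [hmem] with δ h2
    rw [hAD δ h2, div_div_eq_mul_div]
lemma master (d : ℕ) (hd : 2 ≤ d) (L : Type) [LieRing L] [LieAlgebra ℝ L]
    (B : Module.Basis (Idx d) ℝ L)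
    (hbr : ∀ a b : Idx d, ⁅B a, B b⁆ = gdBr hd (fun c => B c) a b)
    (f : Module.Dual ℝ L)
    (hz : ∀ i : Fin d, f (B (zI i)) = 0)
    (o e : Fin d → ℝ)
    (hyo : ∀ j : Fin d, f (B (yoI j)) = o j)
    (hye : ∀ j : Fin d, f (B (yeI j)) = e j)
    (jstar : Fin d) (hjs : (jstar : ℕ) < d - 1) (hojs : o jstar = 0)
    (P A W : ℝ → ℝ)
    (hPto : Filter.Tendsto P (nhdsWithin 0 (Set.Ioi 0)) (nhds (o ⟨d - 1, by omega⟩)))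
    (hWto : Filter.Tendsto W (nhdsWithin 0 (Set.Ioi 0)) (nhds 0))
    (hWA : ∀ᶠ δ in nhdsWithin (0:ℝ) (Set.Ioi 0), W δ * A δ = e jstar)
    (hPS : Filter.Tendsto (fun δ : ℝ =>
        P δ * ((∑ k ∈ Finset.univ.filter
              (fun k : Fin d => (k : ℕ) < d - 1 ∧ o k ≠ 0), e k / o k) + A δ
          + ((Finset.univ.filter (fun k : Fin d => (k : ℕ) < d - 1 ∧ o k = 0 ∧
              e k ≠ 0 ∧ k ≠ jstar)).card : ℝ) * (1 / δ ^ 2)))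
        (nhdsWithin 0 (Set.Ioi 0)) (nhds (e ⟨d - 1, by omega⟩))) :
    f ∈ corSet B := by
  classical
  set fx : Fin d → ℝ := fun i => f (B (xI i)) with hfx
  set u : ℝ → Fin d → ℝ := fun δ k =>
    if o k ≠ 0 then e k / o k else if k = jstar then A δ else if e k ≠ 0 then 1 / δ ^ 2 else 0
    with hu
  set o' : ℝ → Fin d → ℝ := fun δ k =>
    if (k : ℕ) < d - 1 then
      (if o k ≠ 0 then o k else if k = jstar then W δ else if e k ≠ 0 then e k * δ ^ 2 else 0)
    else P δ with ho'
  show coords B f ∈ closure (coords B '' adStar L)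
  refine mem_closure_of_tendsto (b := nhdsWithin (0:ℝ) (Set.Ioi 0)) (f := fun δ : ℝ => pt d (o' δ) (u δ) fx)
    ?_ (Filter.Eventually.of_forall fun δ => pt_mem d hd L B hbr (o' δ) (u δ) fx)
  rw [tendsto_pi_nhds]
  intro w
  have hmem : ∀ᶠ δ in nhdsWithin (0:ℝ) (Set.Ioi 0), 0 < δ := ev_pos
  rcases w with m | j | j | i
  · -- Z coordinates
    have h1 : coords B f (Sum.inl m) = 0 := hz m
    have h2 : (fun δ : ℝ => pt d (o' δ) (u δ) fx (Sum.inl m)) = fun _ => 0 := rfl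
    rw [h1, h2]
    exact tendsto_const_nhds
  · -- odd Y coordinates
    have h1 : coords B f (Sum.inr (Sum.inl j)) = o j := hyo j
    have h2 : (fun δ : ℝ => pt d (o' δ) (u δ) fx (Sum.inr (Sum.inl j)))
        = fun δ => o' δ j := rfl
    rw [h1, h2, ho']
    by_cases hjd : (j : ℕ) < d - 1
    · simp only [if_pos hjd]
      by_cases hoj : o j ≠ 0
      · simp only [if_pos hoj]; exact tendsto_const_nhds
      · simp only [if_neg hoj]
        push_neg at hoj
        by_cases hjj : j = jstar
        · subst hjj
          simp only [if_pos rfl, hoj]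
          exact hWto
        · simp only [if_neg hjj]
          by_cases hej : e j ≠ 0
          · simp only [if_pos hej, hoj]
            have : Filter.Tendsto (fun δ : ℝ => e j * δ ^ 2)
                (nhdsWithin 0 (Set.Ioi 0)) (nhds (e j * 0 ^ 2)) :=
              (tendsto_delta.pow 2).const_mul (e j)
            simpa using this
          · simp only [if_neg hej, hoj]; exact tendsto_const_nhds
    · simp only [if_neg hjd]
      have hjJ : j = (⟨d - 1, by omega⟩ : Fin d) := by
        apply Fin.ext
        have := j.isLt
        simp only []
        omega
      rw [hjJ]
      exact hPto
  · -- even Y coordinates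
    have h1 : coords B f (Sum.inr (Sum.inr (Sum.inl j))) = e j := hye j
    have h2 : (fun δ : ℝ => pt d (o' δ) (u δ) fx (Sum.inr (Sum.inr (Sum.inl j))))
        = fun δ => o' δ j * (if (j : ℕ) < d - 1 then u δ j
            else ∑ k ∈ Finset.univ.filter (fun k : Fin d => (k : ℕ) < d - 1), u δ k) := rfl
    rw [h1, h2]
    by_cases hjd : (j : ℕ) < d - 1
    · simp only [ho', hu, if_pos hjd]
      by_cases hoj : o j ≠ 0
      · simp only [if_pos hoj]
        have : (fun δ : ℝ => o j * (e j / o j)) = fun _ => e j := by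
          funext δ
          rw [mul_comm, div_mul_cancel₀ _ hoj]
        rw [this]
        exact tendsto_const_nhds
      · simp only [if_neg hoj]
        push_neg at hoj
        by_cases hjj : j = jstar
        · subst hjj
          simp only [if_pos rfl]
          refine Filter.Tendsto.congr' ?_ (tendsto_const_nhds (x := e j))
          filter_upwards [hWA] with δ hδ
          exact hδ.symm
        · simp only [if_neg hjj]
          by_cases hej : e j ≠ 0
          · simp only [if_pos hej]
            refine Filter.Tendsto.congr' ?_ (tendsto_const_nhds (x := e j))
            filter_upwards [hmem] with δ hδ
            field_simp
          · simp only [if_neg hej]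
            push_neg at hej
            rw [hej]
            simpa using tendsto_const_nhds (x := (0:ℝ))
    · simp only [if_neg hjd]
      have hjJ : j = (⟨d - 1, by omega⟩ : Fin d) := by
        apply Fin.ext
        have := j.isLt
        simp only []
        omega
      have hsum : ∀ δ : ℝ, ∑ k ∈ Finset.univ.filter (fun k : Fin d => (k : ℕ) < d - 1), u δ k
          = (∑ k ∈ Finset.univ.filter (fun k : Fin d => (k : ℕ) < d - 1 ∧ o k ≠ 0),
              e k / o k) + A δ
            + ((Finset.univ.filter (fun k : Fin d => (k : ℕ) < d - 1 ∧ o k = 0 ∧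
                e k ≠ 0 ∧ k ≠ jstar)).card : ℝ) * (1 / δ ^ 2) := by
        intro δ
        exact sum_split d o e jstar hjs hojs (A δ) (1 / δ ^ 2)
      have h3 : (fun δ : ℝ => o' δ j *
          (∑ k ∈ Finset.univ.filter (fun k : Fin d => (k : ℕ) < d - 1), u δ k))
          = fun δ : ℝ => P δ * ((∑ k ∈ Finset.univ.filter
              (fun k : Fin d => (k : ℕ) < d - 1 ∧ o k ≠ 0), e k / o k) + A δ
            + ((Finset.univ.filter (fun k : Fin d => (k : ℕ) < d - 1 ∧ o k = 0 ∧
                e k ≠ 0 ∧ k ≠ jstar)).card : ℝ) * (1 / δ ^ 2)) := by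
        funext δ
        rw [hsum δ, ho']
        simp only [if_neg hjd]
      rw [h3, hjJ]
      exact hPS
  · -- X coordinates
    have h1 : coords B f (Sum.inr (Sum.inr (Sum.inr i))) = fx i := rfl
    have h2 : (fun δ : ℝ => pt d (o' δ) (u δ) fx (Sum.inr (Sum.inr (Sum.inr i))))
        = fun _ => fx i := rfl
    rw [h1, h2]
    exact tendsto_const_nhds
lemma Q_case1 (d : ℕ) (hd : 2 ≤ d) (o e : Fin d → ℝ) (hQ : Qd d hd o e = 0)
    (hall : ∀ j : Fin d, (j : ℕ) < d - 1 → o j ≠ 0) :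
    e ⟨d - 1, by omega⟩ = o ⟨d - 1, by omega⟩ *
      ∑ k ∈ Finset.univ.filter (fun k : Fin d => (k : ℕ) < d - 1), e k / o k := by
  classical
  set T := Finset.univ.filter (fun k : Fin d => (k : ℕ) < d - 1) with hT
  have hprod : ∏ k ∈ T, o k ≠ 0 := by
    rw [Finset.prod_ne_zero_iff]
    intro k hk
    simp only [hT, Finset.mem_filter, Finset.mem_univ, true_and] at hk
    exact hall k hk
  have key : (∑ k ∈ T, e k / o k) * ∏ k ∈ T, o k
      = ∑ i ∈ T, e i * ∏ j ∈ Finset.univ.filter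
          (fun j : Fin d => (j : ℕ) < d - 1 ∧ j ≠ i), o j := by
    rw [Finset.sum_mul]
    refine Finset.sum_congr rfl fun i hi => ?_
    have hiT : (i : ℕ) < d - 1 := by
      simp only [hT, Finset.mem_filter, Finset.mem_univ, true_and] at hi
      exact hi
    have hfe : Finset.univ.filter (fun j : Fin d => (j : ℕ) < d - 1 ∧ j ≠ i) = T.erase i := by
      ext j
      simp only [hT, Finset.mem_filter, Finset.mem_erase, Finset.mem_univ, true_and]
      tauto
    rw [hfe, ← Finset.mul_prod_erase T o hi]
    have hoi := hall i hiT
    field_simp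
  unfold Qd at hQ
  have h2 : o ⟨d - 1, by omega⟩ * ((∑ k ∈ T, e k / o k) * ∏ k ∈ T, o k)
      = e ⟨d - 1, by omega⟩ * ∏ k ∈ T, o k := by
    rw [key]
    linarith [hQ]
  have h3 : (o ⟨d - 1, by omega⟩ * ∑ k ∈ T, e k / o k) * ∏ k ∈ T, o k
      = e ⟨d - 1, by omega⟩ * ∏ k ∈ T, o k := by
    rw [← h2]; ring
  exact (mul_right_cancel₀ hprod h3).symm

lemma Q_case3 (d : ℕ) (hd : 2 ≤ d) (o e : Fin d → ℝ) (hQ : Qd d hd o e = 0)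
    (hoJ : o ⟨d - 1, by omega⟩ ≠ 0) (j0 : Fin d) (hj0 : (j0 : ℕ) < d - 1)
    (ho0 : o j0 = 0) (he0 : e j0 ≠ 0) :
    ∃ j1 : Fin d, (j1 : ℕ) < d - 1 ∧ o j1 = 0 ∧ j1 ≠ j0 := by
  classical
  by_contra hcon
  push_neg at hcon
  have hother : ∀ j : Fin d, (j : ℕ) < d - 1 → j ≠ j0 → o j ≠ 0 := by
    intro j hj hne hzero
    exact hne (hcon j hj hzero)
  have hprod0 : ∏ j ∈ Finset.univ.filter (fun j : Fin d => (j : ℕ) < d - 1), o j = 0 :=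
    Finset.prod_eq_zero (by simp [Finset.mem_filter, hj0]) ho0
  have hsum : ∑ i ∈ Finset.univ.filter (fun i : Fin d => (i : ℕ) < d - 1),
      e i * ∏ j ∈ Finset.univ.filter (fun j : Fin d => (j : ℕ) < d - 1 ∧ j ≠ i), o j
      = e j0 * ∏ j ∈ Finset.univ.filter (fun j : Fin d => (j : ℕ) < d - 1 ∧ j ≠ j0), o j := by
    refine Finset.sum_eq_single j0 ?_ ?_
    · intro i hi hne
      have : ∏ j ∈ Finset.univ.filter (fun j : Fin d => (j : ℕ) < d - 1 ∧ j ≠ i), o j = 0 :=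
        Finset.prod_eq_zero (i := j0)
          (by simp [Finset.mem_filter, hj0, Ne.symm hne]) ho0
      rw [this, mul_zero]
    · intro h
      exact absurd (by simp [Finset.mem_filter, hj0]) h
  have hprodne : ∏ j ∈ Finset.univ.filter (fun j : Fin d => (j : ℕ) < d - 1 ∧ j ≠ j0), o j ≠ 0 := by
    rw [Finset.prod_ne_zero_iff]
    intro k hk
    simp only [Finset.mem_filter, Finset.mem_univ, true_and] at hk
    exact hother k hk.1 hk.2
  unfold Qd at hQ
  rw [hsum, hprod0, mul_zero, sub_zero] at hQ
  exact (mul_ne_zero (mul_ne_zero hoJ he0) hprodne) (by linarith [hQ])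
/-- For every `d ≥ 2`, every `f ∈ 𝔤_d*` with `f(Z_1) = ⋯ = f(Z_d) = 0` and
`Q_d(f(Y_1),…,f(Y_{2d}))` `= 0` lies in the closure of `{ad*_X ℓ : X ∈ 𝔤_d, ℓ ∈ 𝔤_d*}`. -/
theorem variety_subset_cortex_gd (d : ℕ) (hd : 2 ≤ d) (L : Type) [LieRing L]
    [LieAlgebra ℝ L] (B : Module.Basis (Idx d) ℝ L)
    (hbr : ∀ a b : Idx d, ⁅B a, B b⁆ = gdBr hd (fun c => B c) a b)
    (f : Module.Dual ℝ L)
    (hz : ∀ i : Fin d, f (B (zI i)) = 0)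
    (hq : Qd d hd (fun i => f (B (yoI i))) (fun i => f (B (yeI i))) = 0) :
    f ∈ corSet B := by
  classical
  set o : Fin d → ℝ := fun i => f (B (yoI i)) with ho
  set e : Fin d → ℝ := fun i => f (B (yeI i)) with he
  have hyo : ∀ j : Fin d, f (B (yoI j)) = o j := fun j => rfl
  have hye : ∀ j : Fin d, f (B (yeI j)) = e j := fun j => rfl
  set J : Fin d := ⟨d - 1, by omega⟩ with hJ
  by_cases hS : ∀ j : Fin d, (j : ℕ) < d - 1 → o j ≠ 0
  · -- all relevant odd coordinates nonzero: `f` is exactly realized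
    have hkey := Q_case1 d hd o e hq hS
    have heq : coords B f = pt d o (fun k => e k / o k) (fun i => f (B (xI i))) := by
      funext w
      rcases w with m | j | j | i
      · exact hz m
      · rfl
      · show e j = o j * (if (j : ℕ) < d - 1 then e j / o j
            else ∑ k ∈ Finset.univ.filter (fun k : Fin d => (k : ℕ) < d - 1), e k / o k)
        by_cases hjd : (j : ℕ) < d - 1
        · rw [if_pos hjd, mul_comm, div_mul_cancel₀ _ (hS j hjd)]
        · rw [if_neg hjd]
          have hjJ : j = (⟨d - 1, by omega⟩ : Fin d) := by
            apply Fin.ext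
            have := j.isLt
            simp only []
            omega
          rw [hjJ]
          exact hkey
      · rfl
    show coords B f ∈ closure (coords B '' adStar L)
    rw [heq]
    exact subset_closure (pt_mem d hd L B hbr _ _ _)
  push_neg at hS
  obtain ⟨j0, hj0d, hoj0⟩ := hS
  by_cases hE : ∃ j1 : Fin d, (j1 : ℕ) < d - 1 ∧ o j1 = 0 ∧ e j1 = 0
  · -- Case 2 : some vanishing odd coordinate with vanishing even partner
    obtain ⟨j1, hj1d, hoj1, hej1⟩ := hE
    set C : ℝ := ∑ k ∈ Finset.univ.filter
      (fun k : Fin d => (k : ℕ) < d - 1 ∧ o k ≠ 0), e k / o k with hC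
    set M : ℝ := ((Finset.univ.filter (fun k : Fin d => (k : ℕ) < d - 1 ∧ o k = 0 ∧
      e k ≠ 0 ∧ k ≠ j1)).card : ℝ) with hM
    by_cases hoJ : o J = 0
    · refine master d hd L B hbr f hz o e hyo hye j1 hj1d hoj1
        (fun δ => δ) (fun δ => e J / δ - C - M * (1 / δ ^ 2)) (fun _ => 0) ?_ ?_ ?_ ?_
      · show Filter.Tendsto _ _ (nhds (o J))
        rw [hoJ]
        exact tendsto_delta
      · exact tendsto_const_nhds
      · exact Filter.Eventually.of_forall fun δ => by rw [zero_mul, hej1]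
      · show Filter.Tendsto
          (fun δ : ℝ => δ * (C + (e J / δ - C - M * (1 / δ ^ 2)) + M * (1 / δ ^ 2)))
          (nhdsWithin 0 (Set.Ioi 0)) (nhds (e J))
        refine Filter.Tendsto.congr' ?_ (tendsto_const_nhds (x := e J))
        filter_upwards [ev_pos] with δ hδ
        have hδ0 : δ ≠ 0 := ne_of_gt hδ
        field_simp
        ring
    · refine master d hd L B hbr f hz o e hyo hye j1 hj1d hoj1
        (fun _ => o J) (fun δ => e J / o J - C - M * (1 / δ ^ 2)) (fun _ => 0) ?_ ?_ ?_ ?_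
      · exact tendsto_const_nhds
      · exact tendsto_const_nhds
      · exact Filter.Eventually.of_forall fun δ => by rw [zero_mul, hej1]
      · show Filter.Tendsto
          (fun δ : ℝ => o J * (C + (e J / o J - C - M * (1 / δ ^ 2)) + M * (1 / δ ^ 2)))
          (nhdsWithin 0 (Set.Ioi 0)) (nhds (e J))
        refine Filter.Tendsto.congr' ?_ (tendsto_const_nhds (x := e J))
        filter_upwards [ev_pos] with δ hδ
        have hδ0 : δ ≠ 0 := ne_of_gt hδ
        field_simp
        ring
  · -- Case 3 : all vanishing odd coordinates have nonzero even partners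
    push_neg at hE
    have hero : ∀ j : Fin d, (j : ℕ) < d - 1 → o j = 0 → e j ≠ 0 := hE
    have hej0 : e j0 ≠ 0 := hero j0 hj0d hoj0
    set C : ℝ := ∑ k ∈ Finset.univ.filter
      (fun k : Fin d => (k : ℕ) < d - 1 ∧ o k ≠ 0), e k / o k with hC
    set M : ℝ := ((Finset.univ.filter (fun k : Fin d => (k : ℕ) < d - 1 ∧ o k = 0 ∧
      e k ≠ 0 ∧ k ≠ j0)).card : ℝ) with hM
    set P : ℝ → ℝ := fun δ => if o J = 0 then δ ^ 2 else o J with hP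
    set A : ℝ → ℝ := fun δ =>
      e J / P δ - C - M * (1 / δ ^ 2) + (if o J = 0 then 1 / δ else 0) with hA
    have hMne : o J ≠ 0 → M ≠ 0 := by
      intro h
      obtain ⟨j1, hj1d, hoj1, hne⟩ := Q_case3 d hd o e hq h j0 hj0d hoj0 hej0
      have hmem : j1 ∈ Finset.univ.filter (fun k : Fin d => (k : ℕ) < d - 1 ∧ o k = 0 ∧
          e k ≠ 0 ∧ k ≠ j0) := by
        simp [Finset.mem_filter, hj1d, hoj1, hero j1 hj1d hoj1, hne]
      have hpos := Finset.card_pos.mpr ⟨j1, hmem⟩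
      rw [hM]
      exact_mod_cast hpos.ne'
    have hcore : (∀ᶠ δ in nhdsWithin (0:ℝ) (Set.Ioi 0), A δ ≠ 0) ∧
        Filter.Tendsto (fun δ => e j0 / A δ) (nhdsWithin 0 (Set.Ioi 0)) (nhds 0) := by
      by_cases hoJ : o J = 0
      · by_cases hEM : e J - M = 0
        · refine core_inv A (fun δ => 1 - C * δ) (fun δ => δ) 1 (e j0) one_ne_zero
            tendsto_delta (fun δ hδ => ne_of_gt hδ) ?_ ?_
          · intro δ hδ
            have hδ0 : δ ≠ 0 := ne_of_gt hδ
            have heJ : e J = M := by linarith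
            rw [hA, hP]
            simp only [if_pos hoJ]
            rw [heJ]
            field_simp
            ring
          · simpa using (tendsto_const_nhds (x := (1:ℝ))).sub (tendsto_delta.const_mul C)
        · refine core_inv A (fun δ => (e J - M) + δ - C * δ ^ 2) (fun δ => δ ^ 2)
            (e J - M) (e j0) hEM ?_ (fun δ hδ => pow_ne_zero 2 (ne_of_gt hδ)) ?_ ?_
          · simpa using tendsto_delta.pow 2
          · intro δ hδ
            have hδ0 : δ ≠ 0 := ne_of_gt hδ
            rw [hA, hP]
            simp only [if_pos hoJ]
            field_simp
            ring
          · have := ((tendsto_const_nhds (x := e J - M)).add tendsto_delta).sub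
              ((tendsto_delta.pow 2).const_mul C)
            simpa using this
      · refine core_inv A (fun δ => (e J / o J - C) * δ ^ 2 - M) (fun δ => δ ^ 2)
          (-M) (e j0) (neg_ne_zero.mpr (hMne hoJ)) ?_
          (fun δ hδ => pow_ne_zero 2 (ne_of_gt hδ)) ?_ ?_
        · simpa using tendsto_delta.pow 2
        · intro δ hδ
          have hδ0 : δ ≠ 0 := ne_of_gt hδ
          rw [hA, hP]
          simp only [if_neg hoJ]
          field_simp
          ring
        · have := ((tendsto_delta.pow 2).const_mul (e J / o J - C)).sub
            (tendsto_const_nhds (x := M))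
          simpa [mul_comm] using this
    refine master d hd L B hbr f hz o e hyo hye j0 hj0d hoj0 P A
      (fun δ => e j0 / A δ) ?_ hcore.2 ?_ ?_
    · show Filter.Tendsto P (nhdsWithin 0 (Set.Ioi 0)) (nhds (o J))
      by_cases hoJ : o J = 0
      · have hPe : P = fun δ : ℝ => δ ^ 2 := by
          funext δ
          simp only [hP, if_pos hoJ]
        rw [hPe, hoJ]
        simpa using tendsto_delta.pow 2
      · rw [hP]
        simp only [if_neg hoJ]
        exact tendsto_const_nhds
    · filter_upwards [hcore.1] with δ h
      exact div_mul_cancel₀ (e j0) h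
    · show Filter.Tendsto (fun δ : ℝ => P δ * (C + A δ + M * (1 / δ ^ 2)))
        (nhdsWithin 0 (Set.Ioi 0)) (nhds (e J))
      have hlim : Filter.Tendsto (fun δ : ℝ => e J + (if o J = 0 then δ else 0))
          (nhdsWithin 0 (Set.Ioi 0)) (nhds (e J)) := by
        by_cases hoJ : o J = 0
        · simp only [if_pos hoJ]
          simpa using (tendsto_const_nhds (x := e J)).add tendsto_delta
        · simp only [if_neg hoJ]
          simpa using tendsto_const_nhds (x := e J)
      refine hlim.congr' ?_
      filter_upwards [ev_pos] with δ hδ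
      have hδ0 : δ ≠ 0 := ne_of_gt hδ
      rw [hA, hP]
      by_cases hoJ : o J = 0
      · simp only [if_pos hoJ]
        field_simp
        ring
      · simp only [if_neg hoJ]
        field_simp
        ring
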